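/- Let λ : ℕ → ℝ be nonnegative with ∑'_{j} λ j < ∞, and let P be the probability mass function on finitely supported functions ℕ →₀ ℕ defined by P(n) = exp(−∑'_{j} λ j) · ∏_{j ∈ n.support} (λ j)^(n j)/(n j)!. Then for every k : ℕ, the P-probability of the event {n | ∀ j > k, n j = 0} equals exp(∑_{j ≤ k} λ j) / exp(∑'_{j} λ j). -/

import Mathlib

set_option maxHeartbeats 1000000

private lemma Iio_succ_eq_insert (k : ℕ) :
    Finset.Iio (k + 1) = insert k (Finset.Iio k) := by
  ext j; simp [Finset.mem_Iio]

private lemma Iio_succ_eq_Iic (k : ℕ) : Finset.Iio (k + 1) = Finset.Iic k := by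
  ext j; simp [Finset.mem_Iio, Finset.mem_Iic]

/-- Splitting off the `k`-th coordinate of a profile supported on `Iio (k+1)`. -/
private noncomputable def splitEquiv (k : ℕ) :
    {n : ℕ →₀ ℕ // ∀ j, k + 1 ≤ j → n j = 0} ≃
      ℕ × {n : ℕ →₀ ℕ // ∀ j, k ≤ j → n j = 0} where
  toFun n := (n.1 k, ⟨n.1.erase k, by
    intro j hj
    rcases eq_or_lt_of_le hj with rfl | hj'
    · simp [Finsupp.erase_apply]
    · rw [Finsupp.erase_apply, if_neg (by omega)]
      exact n.2 j (by omega)⟩)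
  invFun p := ⟨p.2.1 + Finsupp.single k p.1, by
    intro j hj
    rw [Finsupp.add_apply, p.2.2 j (by omega), Finsupp.single_apply,
      if_neg (by omega)]
    exact Nat.zero_add 0⟩
  left_inv n := Subtype.ext (Finsupp.erase_add_single k n.1)
  right_inv p := by
    have hp : p.2.1 k = 0 := p.2.2 k le_rfl
    have h1 : (p.2.1 + Finsupp.single k p.1).erase k = p.2.1 := by
      rw [Finsupp.erase_add, Finsupp.erase_single,
        Finsupp.erase_of_notMem_support (by simp [Finsupp.mem_support_iff, hp]),
        add_zero]
    have h2 : (p.2.1 + Finsupp.single k p.1) k = p.1 := by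
      rw [Finsupp.add_apply, hp, Finsupp.single_apply, if_pos rfl, zero_add]
    exact Prod.ext h2 (Subtype.ext h1)

private lemma aux_hasSum (lam : ℕ → ℝ) (hnn : ∀ j, 0 ≤ lam j) :
    ∀ k : ℕ,
      HasSum (fun n : {n : ℕ →₀ ℕ // ∀ j, k ≤ j → n j = 0} ↦
          ∏ j ∈ Finset.Iio k, lam j ^ (n.1 j) / ((n.1 j).factorial : ℝ))
        (∏ j ∈ Finset.Iio k, Real.exp (lam j))
  | 0 => by
    have h0 : Finset.Iio 0 = (∅ : Finset ℕ) := by ext j; simp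
    rw [h0]
    simp only [Finset.prod_empty]
    have huniq : ∀ n : {n : ℕ →₀ ℕ // ∀ j, 0 ≤ j → n j = 0},
        n = (⟨0, fun j _ => rfl⟩ : {n : ℕ →₀ ℕ // ∀ j, 0 ≤ j → n j = 0}) := fun n =>
      Subtype.ext (Finsupp.ext fun j => n.2 j (Nat.zero_le j))
    exact hasSum_single _ (fun b' hb' => absurd (huniq b') hb')
  | (k + 1) => by
    have ih := aux_hasSum lam hnn k
    have hg : HasSum (fun m : ℕ => lam k ^ m / (m.factorial : ℝ)) (Real.exp (lam k)) := by
      rw [Real.exp_eq_exp_ℝ]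
      exact NormedSpace.expSeries_div_hasSum_exp (lam k)
    have hgnn : ∀ m : ℕ, 0 ≤ lam k ^ m / (m.factorial : ℝ) := fun m =>
      div_nonneg (pow_nonneg (hnn k) m) (by positivity)
    have hhnn : ∀ n : {n : ℕ →₀ ℕ // ∀ j, k ≤ j → n j = 0},
        0 ≤ ∏ j ∈ Finset.Iio k, lam j ^ (n.1 j) / ((n.1 j).factorial : ℝ) := fun n =>
      Finset.prod_nonneg fun j _ => div_nonneg (pow_nonneg (hnn j) _) (by positivity)
    have hsumm :
        Summable (fun p : ℕ × {n : ℕ →₀ ℕ // ∀ j, k ≤ j → n j = 0} =>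
          (lam k ^ p.1 / (p.1.factorial : ℝ)) *
            ∏ j ∈ Finset.Iio k, lam j ^ (p.2.1 j) / ((p.2.1 j).factorial : ℝ)) :=
      hg.summable.mul_of_nonneg ih.summable hgnn hhnn
    have hmul := hg.mul ih hsumm
    have key := ((splitEquiv k).hasSum_iff).mpr hmul
    have heq : ∀ n : {n : ℕ →₀ ℕ // ∀ j, k + 1 ≤ j → n j = 0},
        ((fun p : ℕ × {n : ℕ →₀ ℕ // ∀ j, k ≤ j → n j = 0} =>
          (lam k ^ p.1 / (p.1.factorial : ℝ)) *
            ∏ j ∈ Finset.Iio k, lam j ^ (p.2.1 j) / ((p.2.1 j).factorial : ℝ))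
          ∘ splitEquiv k) n
        = ∏ j ∈ Finset.Iio (k + 1), lam j ^ (n.1 j) / ((n.1 j).factorial : ℝ) := by
      intro n
      rw [Iio_succ_eq_insert, Finset.prod_insert (by simp)]
      simp only [Function.comp_apply]
      rw [show ((splitEquiv k) n).1 = n.1 k from rfl]
      congr 1
      refine Finset.prod_congr rfl fun j hj => ?_
      rw [show ((((splitEquiv k) n).2 : {n : ℕ →₀ ℕ // ∀ j, k ≤ j → n j = 0}) : ℕ →₀ ℕ) j
            = (n.1.erase k) j from rfl,
        Finsupp.erase_apply, if_neg (by simp only [Finset.mem_Iio] at hj; omega)]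
    have hval : (∏ j ∈ Finset.Iio (k + 1), Real.exp (lam j))
        = Real.exp (lam k) * ∏ j ∈ Finset.Iio k, Real.exp (lam j) := by
      rw [Iio_succ_eq_insert, Finset.prod_insert (by simp)]
    rw [hval]
    exact (funext heq) ▸ key

theorem stmt_5 (lam : ℕ → ℝ) (hnn : ∀ j, 0 ≤ lam j) (hsum : Summable lam) (k : ℕ) :
    ∑' n : {n : ℕ →₀ ℕ // ∀ j, k < j → n j = 0},
        Real.exp (-(∑' j, lam j)) *
          ∏ j ∈ (n : ℕ →₀ ℕ).support,
            lam j ^ ((n : ℕ →₀ ℕ) j) / (((n : ℕ →₀ ℕ) j).factorial : ℝ)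
      = Real.exp (∑ j ∈ Finset.Iic k, lam j) / Real.exp (∑' j, lam j) := by
  have hS := aux_hasSum lam hnn (k + 1)
  rw [Iio_succ_eq_Iic] at hS
  have hS' : HasSum (fun n : {n : ℕ →₀ ℕ // ∀ j, k < j → n j = 0} ↦
        ∏ j ∈ Finset.Iic k, lam j ^ ((n : ℕ →₀ ℕ) j) / (((n : ℕ →₀ ℕ) j).factorial : ℝ))
      (∏ j ∈ Finset.Iic k, Real.exp (lam j)) := hS
  have hrw : ∀ n : {n : ℕ →₀ ℕ // ∀ j, k < j → n j = 0},
      ∏ j ∈ (n : ℕ →₀ ℕ).support,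
          lam j ^ ((n : ℕ →₀ ℕ) j) / (((n : ℕ →₀ ℕ) j).factorial : ℝ)
        = ∏ j ∈ Finset.Iic k,
            lam j ^ ((n : ℕ →₀ ℕ) j) / (((n : ℕ →₀ ℕ) j).factorial : ℝ) := by
    intro n
    apply Finset.prod_subset
    · intro j hj
      simp only [Finsupp.mem_support_iff] at hj
      simp only [Finset.mem_Iic]
      by_contra h
      exact hj (n.2 j (by omega))
    · intro j _ hj
      simp only [Finsupp.mem_support_iff, not_not] at hj
      simp [hj]
  have h1 : (∑' n : {n : ℕ →₀ ℕ // ∀ j, k < j → n j = 0},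
        Real.exp (-(∑' j, lam j)) *
          ∏ j ∈ (n : ℕ →₀ ℕ).support,
            lam j ^ ((n : ℕ →₀ ℕ) j) / (((n : ℕ →₀ ℕ) j).factorial : ℝ))
      = Real.exp (-(∑' j, lam j)) *
        ∑' n : {n : ℕ →₀ ℕ // ∀ j, k < j → n j = 0},
          ∏ j ∈ Finset.Iic k,
            lam j ^ ((n : ℕ →₀ ℕ) j) / (((n : ℕ →₀ ℕ) j).factorial : ℝ) := by
    rw [← tsum_mul_left]
    exact tsum_congr fun n => by rw [hrw n]
  rw [h1, hS'.tsum_eq, ← Real.exp_sum, Real.exp_neg, div_eq_mul_inv, mul_comm]
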